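/- Let (M, g₀, u) solve u·Ric = D²u - n·u·g₀ and Δu = n·u. Then the vector field Y = D|Du|² - (2/n)·Δu·Du satisfies div(Y/u) = (2/u)·(|D²u|² - (Δu)²/n) ≥ 0 at points where u > 0. -/
import Mathlib


open Matrix

/-- For a solution of `u·Ric = D²u - n·u·g₀`, `Δu = n·u`, the vector field
`Y = ∇|Du|² - (2/n)·Δu·Du` satisfies
`div(Y/u) = (2/u)(|D²u|² - (Δu)²/n) ≥ 0` where `u > 0`.
Pointwise encoding (orthonormal frame, `g₀ = 1`): `Hess = D²u`,
`Δu = tr Hess`, `L = Δ|Du|²`, `DΔu = ⟨∇Δu,Du⟩`, `DY = div(Y/u)`, with the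
Bochner formula and the product/chain rules for `div(Y/u)` as hypotheses. -/
theorem div_Y_negative_Lambda (n : ℕ) (hn : 3 ≤ n) {M : Type*} (x : M)
    (u : M → ℝ) (hu : 0 < u x)
    (Ric Hess : M → Matrix (Fin n) (Fin n) ℝ)
    (Du : M → Fin n → ℝ) (L DΔu DY : M → ℝ)
    (hBochner : L x = 2 * (∑ i, ∑ j, Hess x i j ^ 2)
      + 2 * (Du x ⬝ᵥ Ric x *ᵥ Du x) + 2 * DΔu x)
    (hstatic : u x • Ric x = Hess x - ((n : ℝ) * u x) • (1 : Matrix (Fin n) (Fin n) ℝ))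
    (hlap : (Hess x).trace = (n : ℝ) * u x)
    (hDΔu : DΔu x = (n : ℝ) * ∑ i, Du x i ^ 2)
    (hDY : DY x = (1 / u x) * (L x - (2 / n) * (DΔu x + (Hess x).trace ^ 2))
      - (1 / u x ^ 2) * (2 * (Du x ⬝ᵥ Hess x *ᵥ Du x)
        - (2 / n) * (Hess x).trace * ∑ i, Du x i ^ 2)) :
    DY x = (2 / u x) * ((∑ i, ∑ j, Hess x i j ^ 2) - (Hess x).trace ^ 2 / n) ∧
      0 ≤ DY x := by
  have hn0 : (0:ℝ) < n := by positivity
  have hq : Du x ⬝ᵥ Du x = ∑ i, Du x i ^ 2 := by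
    simp [dotProduct, sq]
  have hRic : u x * (Du x ⬝ᵥ Ric x *ᵥ Du x)
      = Du x ⬝ᵥ Hess x *ᵥ Du x - (n : ℝ) * u x * ∑ i, Du x i ^ 2 := by
    have := congrArg (fun A : Matrix (Fin n) (Fin n) ℝ => Du x ⬝ᵥ A *ᵥ Du x) hstatic
    simpa [smul_mulVec, dotProduct_smul, sub_mulVec, dotProduct_sub,
      one_mulVec, hq, smul_eq_mul, mul_assoc] using this
  have hR : Du x ⬝ᵥ Ric x *ᵥ Du x
      = (Du x ⬝ᵥ Hess x *ᵥ Du x) / u x - (n : ℝ) * ∑ i, Du x i ^ 2 := by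
    field_simp
    linarith [hRic]
  have heq : DY x = (2 / u x) * ((∑ i, ∑ j, Hess x i j ^ 2) - (Hess x).trace ^ 2 / n) := by
    rw [hDY, hBochner, hR, hDΔu, hlap]
    field_simp
    ring
  refine ⟨heq, ?_⟩
  rw [heq]
  have htr : (Hess x).trace ^ 2 ≤ (n : ℝ) * ∑ i, ∑ j, Hess x i j ^ 2 := by
    have h1 : (Hess x).trace ^ 2 ≤ (n : ℝ) * ∑ i, Hess x i i ^ 2 := by
      have := sq_sum_le_card_mul_sum_sq (s := Finset.univ)
        (f := fun i : Fin n => Hess x i i)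
      simpa [Matrix.trace, Matrix.diag] using this
    have h2 : ∑ i, Hess x i i ^ 2 ≤ ∑ i, ∑ j, Hess x i j ^ 2 := by
      apply Finset.sum_le_sum
      intro i _
      have : Hess x i i ^ 2 ≤ ∑ j, Hess x i j ^ 2 :=
        Finset.single_le_sum (f := fun j => Hess x i j ^ 2)
          (fun j _ => sq_nonneg _) (Finset.mem_univ i)
      exact this
    nlinarith
  have : 0 ≤ (∑ i, ∑ j, Hess x i j ^ 2) - (Hess x).trace ^ 2 / n := by
    rw [sub_nonneg, div_le_iff₀ hn0]
    linarith
  positivity
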